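/- arXiv:1805.00075 — 4 statements merged into one kernel-verified Lean document; each statement's English description precedes it below -/
import Mathlib

section
/- Let r = ∑_{0≤j≤q} 2^{h_j} be a positive integer with h_0 > h_1 > ⋯ > h_q ≥ 0, and set r_j := ∑_{i<j} 2^{h_i}. Then for every real x > 0 one has ∑_{0 ≤ ℓ < r} ε_ℓ/(x+ℓ) = ∑_{0 ≤ j ≤ q} (−1)^j · g_{h_j}(x + r_j). -/
/-- Thue–Morse signs: `tmSign n = ε_n = (-1)^{t_n}`, where `t_n` is the parity of
the number of ones in the binary representation of `n`. -/
noncomputable def tmSign (n : ℕ) : ℝ := (-1 : ℝ) ^ (Nat.digits 2 n).sum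

/-- `gFun k x = g_k(x) = ∑_{0 ≤ ℓ < 2^k} ε_ℓ / (x + ℓ)`. -/
noncomputable def gFun (k : ℕ) (x : ℝ) : ℝ :=
  ∑ ℓ ∈ Finset.range (2 ^ k), tmSign ℓ / (x + ℓ)


lemma digitsum_add (k m ℓ : ℕ) (hℓ : ℓ < 2 ^ k) :
    (Nat.digits 2 (ℓ + 2 ^ k * m)).sum = (Nat.digits 2 ℓ).sum + (Nat.digits 2 m).sum := by
  rcases Nat.eq_zero_or_pos m with rfl | hm
  · simp
  have hlen : (Nat.digits 2 ℓ).length ≤ k := by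
    rcases Nat.eq_zero_or_pos ℓ with rfl | hl
    · simp
    · rw [Nat.digits_len 2 ℓ one_lt_two hl.ne']
      have := Nat.log_lt_of_lt_pow hl.ne' hℓ
      omega
  have hk : (Nat.digits 2 ℓ).length + (k - (Nat.digits 2 ℓ).length) = k := by omega
  have := Nat.digits_append_zeroes_append_digits (b := 2) (k := k - (Nat.digits 2 ℓ).length)
    (m := m) (n := ℓ) one_lt_two hm
  rw [hk] at this
  rw [← this]
  simp [List.sum_append, List.sum_replicate]

lemma tmSign_add (k m ℓ : ℕ) (hℓ : ℓ < 2 ^ k) :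
    tmSign (ℓ + 2 ^ k * m) = tmSign ℓ * tmSign m := by
  unfold tmSign
  rw [digitsum_add k m ℓ hℓ, pow_add]

lemma tmSign_one : tmSign 1 = -1 := by
  unfold tmSign
  norm_num

lemma tmSign_block (n : ℕ) (h : ℕ → ℕ) (hdec : ∀ i j, i < j → j < n → h j < h i)
    (t : ℕ) (ht : ∀ j, j < n → t ≤ h j) (i : ℕ) (hi : i < 2 ^ t) :
    tmSign (i + ∑ j ∈ Finset.range n, 2 ^ h j) = (-1 : ℝ) ^ n * tmSign i := by
  induction n generalizing t i with
  | zero => simp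
  | succ n ih =>
    have hin : i < 2 ^ h n := lt_of_lt_of_le hi (Nat.pow_le_pow_right (by norm_num) (ht n (by omega)))
    have key : i + ∑ j ∈ Finset.range (n + 1), 2 ^ h j
        = (i + 2 ^ h n * 1) + ∑ j ∈ Finset.range n, 2 ^ h j := by
      rw [Finset.sum_range_succ]; ring
    rw [key, ih (fun i j hij hj => hdec i j hij (by omega)) (h n + 1)
      (fun j hj => hdec j n hj (by omega))
      _ (by rw [pow_succ]; omega),
      tmSign_add _ _ _ hin, tmSign_one, pow_succ]
    ring

/-- if `r = ∑_{0 ≤ j ≤ q} 2^{h_j}` with `h_0 > h_1 > ⋯ > h_q ≥ 0`, and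
`r_j = ∑_{i < j} 2^{h_i}`, then for all `x > 0`,
`∑_{0 ≤ ℓ < r} ε_ℓ/(x+ℓ) = ∑_{0 ≤ j ≤ q} (-1)^j g_{h_j}(x + r_j)`. -/
theorem stmt_3 (q : ℕ) (h : ℕ → ℕ)
    (hdec : ∀ i j, i < j → j ≤ q → h j < h i)
    (x : ℝ) (hx : 0 < x) :
    ∑ ℓ ∈ Finset.range (∑ j ∈ Finset.range (q + 1), 2 ^ h j),
        tmSign ℓ / (x + ℓ)
      = ∑ j ∈ Finset.range (q + 1),
          (-1 : ℝ) ^ j * gFun (h j) (x + ((∑ i ∈ Finset.range j, 2 ^ h i : ℕ) : ℝ)) := by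
  clear hx
  induction q with
  | zero => simp [gFun]
  | succ q ih =>
    have hdec' : ∀ i j, i < j → j ≤ q → h j < h i := fun i j hij hj => hdec i j hij (by omega)
    set r : ℕ := ∑ j ∈ Finset.range (q + 1), 2 ^ h j with hr
    have hL : ∑ j ∈ Finset.range (q + 1 + 1), 2 ^ h j = r + 2 ^ h (q + 1) :=
      Finset.sum_range_succ _ _
    rw [hL, Finset.sum_range_add (fun ℓ => tmSign ℓ / (x + ℓ)) r (2 ^ h (q + 1))]
    rw [Finset.sum_range_succ (f := fun j =>
      (-1 : ℝ) ^ j * gFun (h j) (x + ((∑ i ∈ Finset.range j, 2 ^ h i : ℕ) : ℝ))), ← ih hdec']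
    congr 1
    have hsign : ∀ i ∈ Finset.range (2 ^ h (q + 1)),
        tmSign (r + i) / (x + (r + i : ℕ)) =
          (-1 : ℝ) ^ (q + 1) * (tmSign i / ((x + (r : ℕ)) + i)) := by
      intro i hi
      rw [Finset.mem_range] at hi
      have := tmSign_block (q + 1) h (fun a b hab hb => hdec a b hab (by omega))
        (h (q + 1)) (fun j hj => le_of_lt (hdec j (q + 1) hj le_rfl)) i hi
      rw [add_comm r i, this]
      push_cast
      ring
    rw [Finset.sum_congr rfl hsign, gFun, Finset.mul_sum]
end

section
/- For every integer k ≥ 0 there exists a constant C_k > 0 such that for all sufficiently large real x one has |g_k(x) − c_k/x^{k+1}| ≤ C_k/x^{k+2}; that is, g_k(x) = c_k/x^{k+1} + O_k(x^{−k−2}) as x → ∞. -/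
/-- `cConst k = c_k = 2^{k(k-1)/2} k!`. -/
noncomputable def cConst (k : ℕ) : ℝ := 2 ^ (k * (k - 1) / 2) * Nat.factorial k

lemma digitsSum_rec (n : ℕ) : (Nat.digits 2 n).sum = n % 2 + (Nat.digits 2 (n / 2)).sum := by
  rcases Nat.eq_zero_or_pos n with h | h
  · simp [h]
  · rw [Nat.digits_def' (by norm_num : 1 < 2) h]
    simp

lemma digitsSum_add_pow (k : ℕ) : ∀ ℓ : ℕ, ℓ < 2 ^ k →
    (Nat.digits 2 (ℓ + 2 ^ k)).sum = (Nat.digits 2 ℓ).sum + 1 := by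
  induction k with
  | zero =>
    intro ℓ hℓ
    interval_cases ℓ
    simp
  | succ k ih =>
    intro ℓ hℓ
    have hp : (2:ℕ) ^ (k + 1) = 2 * 2 ^ k := by ring
    rw [digitsSum_rec (ℓ + 2 ^ (k + 1)), digitsSum_rec ℓ]
    have h1 : (ℓ + 2 ^ (k + 1)) % 2 = ℓ % 2 := by omega
    have h2 : (ℓ + 2 ^ (k + 1)) / 2 = ℓ / 2 + 2 ^ k := by omega
    rw [h1, h2, ih (ℓ / 2) (by omega)]
    omega

lemma tmSign_add_pow (k ℓ : ℕ) (h : ℓ < 2 ^ k) : tmSign (ℓ + 2 ^ k) = -tmSign ℓ := by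
  unfold tmSign
  rw [digitsSum_add_pow k ℓ h, pow_succ]
  ring

/-- Moments of the Thue–Morse signs. -/
noncomputable def tmS (k j : ℕ) : ℝ := ∑ ℓ ∈ Finset.range (2 ^ k), tmSign ℓ * (ℓ : ℝ) ^ j

lemma tmS_succ (k j : ℕ) :
    tmS (k + 1) j
      = -∑ m ∈ Finset.range j, (j.choose m : ℝ) * ((2:ℝ) ^ k) ^ (j - m) * tmS k m := by
  have hsplit : tmS (k + 1) j
      = tmS k j + ∑ i ∈ Finset.range (2 ^ k), tmSign (2 ^ k + i) * ((2 ^ k + i : ℕ) : ℝ) ^ j := by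
    unfold tmS
    rw [show (2:ℕ) ^ (k + 1) = 2 ^ k + 2 ^ k by ring, Finset.sum_range_add]
  have hsec : ∀ i ∈ Finset.range (2 ^ k),
      tmSign (2 ^ k + i) * ((2 ^ k + i : ℕ) : ℝ) ^ j
        = -(tmSign i * ∑ m ∈ Finset.range (j + 1),
            (i : ℝ) ^ m * ((2:ℝ) ^ k) ^ (j - m) * (j.choose m : ℝ)) := by
    intro i hi
    rw [Finset.mem_range] at hi
    rw [show 2 ^ k + i = i + 2 ^ k from by ring, tmSign_add_pow k i hi]
    have : ((i + 2 ^ k : ℕ) : ℝ) ^ j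
        = ∑ m ∈ Finset.range (j + 1), (i : ℝ) ^ m * ((2:ℝ) ^ k) ^ (j - m) * (j.choose m : ℝ) := by
      push_cast
      exact add_pow (i : ℝ) ((2:ℝ) ^ k) j
    rw [this]
    ring
  rw [hsplit, Finset.sum_congr rfl hsec, Finset.sum_neg_distrib]
  · rw [show ∀ S : ℝ, tmS k j + -S = -(S - tmS k j) from fun S => by ring]
    congr 1
    have hswap : ∑ i ∈ Finset.range (2 ^ k), tmSign i * ∑ m ∈ Finset.range (j + 1),
          (i : ℝ) ^ m * ((2:ℝ) ^ k) ^ (j - m) * (j.choose m : ℝ)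
        = ∑ m ∈ Finset.range (j + 1),
            (j.choose m : ℝ) * ((2:ℝ) ^ k) ^ (j - m) * tmS k m := by
      simp_rw [Finset.mul_sum]
      rw [Finset.sum_comm]
      unfold tmS
      simp_rw [Finset.mul_sum]
      refine Finset.sum_congr rfl fun m _ => Finset.sum_congr rfl fun i _ => by ring
    rw [hswap, Finset.sum_range_succ]
    simp [tmS]

lemma tmS_eq_zero : ∀ k j : ℕ, j < k → tmS k j = 0 := by
  intro k
  induction k with
  | zero => intro j h; omega
  | succ k ih =>
    intro j hj
    rw [tmS_succ]
    rw [Finset.sum_eq_zero, neg_zero]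
    intro m hm
    rw [Finset.mem_range] at hm
    rw [ih m (by omega)]
    ring

lemma tmS_diag : ∀ k : ℕ, tmS k k = (-1 : ℝ) ^ k * cConst k := by
  intro k
  induction k with
  | zero => simp [tmS, tmSign, cConst]
  | succ k ih =>
    rw [tmS_succ, Finset.sum_range_succ]
    rw [Finset.sum_eq_zero (fun m hm => by
      rw [Finset.mem_range] at hm
      rw [tmS_eq_zero k m hm]; ring), zero_add, ih]
    have hch : ((k+1).choose k : ℝ) = (k : ℝ) + 1 := by
      rw [Nat.choose_succ_self_right]; push_cast; ring
    have hexp : cConst (k + 1) = ((k:ℝ) + 1) * 2 ^ k * cConst k := by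
      unfold cConst
      have h1 : (k + 1) * ((k + 1) - 1) / 2 = k + k * (k - 1) / 2 := by
        simp only [Nat.add_sub_cancel]
        cases k with
        | zero => simp
        | succ n =>
          obtain ⟨c, hc⟩ := Nat.even_mul_succ_self n
          have h2 : (n + 1 + 1) * (n + 1) = n * (n + 1) + 2 * (n + 1) := by ring
          have h3 : (n + 1) * ((n + 1) - 1) = n * (n + 1) := by
            simp [Nat.mul_comm]
          omega
      rw [h1, pow_add, Nat.factorial_succ]
      push_cast
      ring
    rw [hexp, hch]
    have : (k + 1) - k = 1 := by omega
    rw [this]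
    ring

lemma inv_expand (x : ℝ) (hx : 0 < x) (ℓ : ℕ) (n : ℕ) :
    1 / (x + ℓ) = (∑ j ∈ Finset.range n, (-(ℓ:ℝ)) ^ j / x ^ (j + 1))
      + (-(ℓ:ℝ)) ^ n / (x ^ n * (x + ℓ)) := by
  have hℓ : (0:ℝ) ≤ (ℓ:ℝ) := Nat.cast_nonneg ℓ
  have hxl : (0:ℝ) < x + ℓ := by linarith
  have hx' : x ≠ 0 := ne_of_gt hx
  have hxl' : x + (ℓ:ℝ) ≠ 0 := ne_of_gt hxl
  induction n with
  | zero => simp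
  | succ n ih =>
    rw [Finset.sum_range_succ, ih]
    have key : (-(ℓ:ℝ)) ^ n / (x ^ n * (x + ℓ))
        = (-(ℓ:ℝ)) ^ n / x ^ (n + 1) + (-(ℓ:ℝ)) ^ (n + 1) / (x ^ (n + 1) * (x + ℓ)) := by
      rw [div_add_div _ _ (by positivity) (by positivity)]
      rw [div_eq_div_iff (by positivity) (by positivity)]
      ring
    rw [key]
    ring

/-- for every `k ≥ 0` there is `C_k > 0` such that for all sufficiently
large `x`, `|g_k(x) - c_k/x^{k+1}| ≤ C_k/x^{k+2}`. -/
theorem stmt_4 (k : ℕ) :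
    ∃ C : ℝ, 0 < C ∧ ∃ x₀ : ℝ, ∀ x : ℝ, x₀ ≤ x →
      |gFun k x - cConst k / x ^ (k + 1)| ≤ C / x ^ (k + 2) := by
  set M : ℝ := 2 ^ k * ((2:ℝ) ^ k) ^ (k + 2) with hM
  refine ⟨|tmS k (k + 1)| + M + 1, by positivity, 1, fun x hx => ?_⟩
  have hx0 : (0:ℝ) < x := by linarith
  have hxp : (0:ℝ) < x ^ (k + 2) := by positivity
  set R : ℝ := ∑ ℓ ∈ Finset.range (2 ^ k),
      tmSign ℓ * ((-(ℓ:ℝ)) ^ (k + 2) / (x ^ (k + 2) * (x + ℓ))) with hR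
  -- decomposition of gFun
  have hterm : ∀ ℓ ∈ Finset.range (2 ^ k), tmSign ℓ / (x + ℓ)
      = (∑ j ∈ Finset.range (k + 2), tmSign ℓ * ((-(ℓ:ℝ)) ^ j / x ^ (j + 1)))
        + tmSign ℓ * ((-(ℓ:ℝ)) ^ (k + 2) / (x ^ (k + 2) * (x + ℓ))) := by
    intro ℓ _
    rw [div_eq_mul_one_div, inv_expand x hx0 ℓ (k + 2), mul_add, Finset.mul_sum]
  have h1 : gFun k x
      = (∑ j ∈ Finset.range (k + 2), (-1:ℝ) ^ j * tmS k j / x ^ (j + 1)) + R := by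
    unfold gFun
    rw [Finset.sum_congr rfl hterm, Finset.sum_add_distrib]
    congr 1
    rw [Finset.sum_comm]
    refine Finset.sum_congr rfl fun j _ => ?_
    have step : ∀ ℓ ∈ Finset.range (2 ^ k),
        tmSign ℓ * ((-(ℓ:ℝ)) ^ j / x ^ (j + 1))
          = tmSign ℓ * (ℓ:ℝ) ^ j * ((-1:ℝ) ^ j / x ^ (j + 1)) := by
      intro ℓ _
      rw [neg_pow]
      ring
    rw [Finset.sum_congr rfl step, ← Finset.sum_mul]
    unfold tmS
    ring
  have hsplit : ∑ j ∈ Finset.range (k + 2), (-1:ℝ) ^ j * tmS k j / x ^ (j + 1)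
      = cConst k / x ^ (k + 1) + (-1:ℝ) ^ (k + 1) * tmS k (k + 1) / x ^ (k + 2) := by
    rw [Finset.sum_range_succ, Finset.sum_range_succ]
    rw [Finset.sum_eq_zero (fun j hj => by
      rw [Finset.mem_range] at hj
      rw [tmS_eq_zero k j hj]; ring), zero_add]
    rw [tmS_diag]
    have hsq : ((-1:ℝ) ^ k) * ((-1:ℝ) ^ k) = 1 := by
      rw [← pow_add]
      exact Even.neg_one_pow ⟨k, rfl⟩
    have : (-1:ℝ) ^ k * ((-1:ℝ) ^ k * cConst k) / x ^ (k + 1) = cConst k / x ^ (k + 1) := by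
      rw [← mul_assoc, hsq, one_mul]
    rw [this]
  have key : gFun k x - cConst k / x ^ (k + 1)
      = (-1:ℝ) ^ (k + 1) * tmS k (k + 1) / x ^ (k + 2) + R := by
    rw [h1, hsplit]; ring
  -- bound on R
  have hRb : |R| ≤ M / x ^ (k + 2) := by
    have hbound : ∀ ℓ ∈ Finset.range (2 ^ k),
        |tmSign ℓ * ((-(ℓ:ℝ)) ^ (k + 2) / (x ^ (k + 2) * (x + ℓ)))|
          ≤ ((2:ℝ) ^ k) ^ (k + 2) / x ^ (k + 2) := by
      intro ℓ hℓ
      rw [Finset.mem_range] at hℓ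
      have hℓ0 : (0:ℝ) ≤ (ℓ:ℝ) := Nat.cast_nonneg ℓ
      have hxl : (0:ℝ) < x + ℓ := by linarith
      have habs1 : |tmSign ℓ| = 1 := by
        unfold tmSign
        rw [abs_pow, abs_neg, abs_one, one_pow]
      have habs2 : |(-(ℓ:ℝ)) ^ (k + 2)| = (ℓ:ℝ) ^ (k + 2) := by
        rw [abs_pow, abs_neg, abs_of_nonneg hℓ0]
      rw [abs_mul, habs1, one_mul, abs_div, habs2,
        abs_of_pos (by positivity : (0:ℝ) < x ^ (k + 2) * (x + ℓ))]
      refine div_le_div₀ (by positivity) ?_ (by positivity) ?_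
      · refine pow_le_pow_left₀ hℓ0 ?_ _
        calc (ℓ:ℝ) ≤ ((2:ℕ) ^ k : ℕ) := by exact_mod_cast hℓ.le
          _ = (2:ℝ) ^ k := by push_cast; ring
      · nlinarith [pow_pos hx0 (k + 2)]
    calc |R| ≤ ∑ ℓ ∈ Finset.range (2 ^ k),
          |tmSign ℓ * ((-(ℓ:ℝ)) ^ (k + 2) / (x ^ (k + 2) * (x + ℓ)))| :=
        Finset.abs_sum_le_sum_abs _ _
      _ ≤ ∑ _ℓ ∈ Finset.range (2 ^ k), ((2:ℝ) ^ k) ^ (k + 2) / x ^ (k + 2) :=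
        Finset.sum_le_sum hbound
      _ = M / x ^ (k + 2) := by
        rw [Finset.sum_const, Finset.card_range, nsmul_eq_mul, hM]
        push_cast
        ring
  -- conclude
  rw [key]
  calc |(-1:ℝ) ^ (k + 1) * tmS k (k + 1) / x ^ (k + 2) + R|
      ≤ |(-1:ℝ) ^ (k + 1) * tmS k (k + 1) / x ^ (k + 2)| + |R| := abs_add_le _ _
    _ ≤ |tmS k (k + 1)| / x ^ (k + 2) + M / x ^ (k + 2) := by
        refine add_le_add ?_ hRb
        rw [abs_div, abs_mul, abs_pow, abs_neg, abs_one, one_pow, one_mul,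
          abs_of_pos hxp]
    _ ≤ (|tmS k (k + 1)| + M + 1) / x ^ (k + 2) := by
        have h9 : |tmS k (k + 1)| + M ≤ |tmS k (k + 1)| + M + 1 := by linarith
        rw [← add_div]
        exact div_le_div_of_nonneg_right h9 hxp.le
end

section
/- For every integer k ≥ 0 and every real x ≥ (k+1)·2^{k+2} one has g_k(x) < (4/3)·g_k(x + 2^k). -/
open Real MeasureTheory Set

lemma tmSign_step (n : ℕ) : tmSign n = (-1 : ℝ) ^ (n % 2) * tmSign (n / 2) := by
  rcases Nat.eq_zero_or_pos n with h | h
  · simp [h, tmSign]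
  · unfold tmSign
    rw [Nat.digits_def' (by norm_num : 1 < 2) h]
    simp [pow_add]

lemma tmSign_pow_add (k : ℕ) : ∀ ℓ < 2 ^ k, tmSign (2 ^ k + ℓ) = - tmSign ℓ := by
  induction k with
  | zero =>
    intro ℓ hℓ
    interval_cases ℓ
    simp [tmSign]
  | succ k ih =>
    intro ℓ hℓ
    have h2 : ℓ / 2 < 2 ^ k := by
      have : (2:ℕ) ^ (k+1) = 2 ^ k * 2 := by ring
      omega
    rw [tmSign_step (2 ^ (k+1) + ℓ), tmSign_step ℓ]
    obtain ⟨m, hm⟩ : ∃ m, (2:ℕ)^k = m := ⟨_, rfl⟩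
    have e1 : (2 ^ (k+1) + ℓ) % 2 = ℓ % 2 := by
      have : (2:ℕ) ^ (k+1) = m * 2 := by rw [← hm]; ring
      omega
    have e2 : (2 ^ (k+1) + ℓ) / 2 = 2 ^ k + ℓ / 2 := by
      have : (2:ℕ) ^ (k+1) = m * 2 := by rw [← hm]; ring
      rw [hm]; omega
    rw [e1, e2, ih _ h2]
    ring

/-- auxiliary weight -/
noncomputable def W (k : ℕ) (t : ℝ) : ℝ :=
  ∏ i ∈ Finset.range k, (1 - Real.exp (-(2 ^ i * t)))

lemma sum_tm_exp (k : ℕ) (t : ℝ) :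
    ∑ ℓ ∈ Finset.range (2 ^ k), tmSign ℓ * Real.exp (-((ℓ : ℝ) * t)) = W k t := by
  induction k with
  | zero => simp [W, tmSign]
  | succ k ih =>
    have h2 : (2:ℕ) ^ (k+1) = 2 ^ k + 2 ^ k := by ring
    rw [h2, Finset.sum_range_add]
    have key : ∀ ℓ ∈ Finset.range (2 ^ k),
        tmSign (2 ^ k + ℓ) * Real.exp (-(((2 ^ k + ℓ : ℕ) : ℝ) * t))
          = -Real.exp (-(2 ^ k * t)) * (tmSign ℓ * Real.exp (-((ℓ : ℝ) * t))) := by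
      intro ℓ hℓ
      rw [tmSign_pow_add k ℓ (Finset.mem_range.1 hℓ)]
      push_cast
      rw [show -((2 ^ k + (ℓ:ℝ)) * t) = -(2 ^ k * t) + -((ℓ:ℝ) * t) by ring, Real.exp_add]
      ring
    rw [Finset.sum_congr rfl key, ← Finset.mul_sum, ih]
    simp only [W, Finset.prod_range_succ]
    ring

lemma W_nonneg (k : ℕ) {t : ℝ} (ht : 0 ≤ t) : 0 ≤ W k t := by
  apply Finset.prod_nonneg
  intro i _
  have : Real.exp (-(2 ^ i * t)) ≤ 1 := by
    rw [← Real.exp_zero]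
    apply Real.exp_le_exp.2
    have : (0:ℝ) ≤ 2 ^ i * t := by positivity
    linarith
  linarith

lemma W_le_one (k : ℕ) {t : ℝ} (ht : 0 ≤ t) : W k t ≤ 1 := by
  apply Finset.prod_le_one
  · intro i _
    linarith [Real.exp_nonneg (-(2 ^ i * t)), Real.exp_le_one_iff.2
      (by have : (0:ℝ) ≤ 2 ^ i * t := by positivity
          linarith : -(2 ^ i * t) ≤ 0)]
  · intro i _
    linarith [Real.exp_nonneg (-(2 ^ i * t)), Real.exp_le_one_iff.2
      (by have : (0:ℝ) ≤ 2 ^ i * t := by positivity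
          linarith : -(2 ^ i * t) ≤ 0)]

lemma W_pos (k : ℕ) {t : ℝ} (ht : 0 < t) : 0 < W k t := by
  apply Finset.prod_pos
  intro i _
  have : Real.exp (-(2 ^ i * t)) < 1 := by
    rw [← Real.exp_zero]
    apply Real.exp_lt_exp.2
    have h : (0:ℝ) < 2 ^ i * t := by positivity
    linarith
  linarith

lemma integrable_exp_mul_W (k : ℕ) {x r : ℝ} (hx : 0 < x) (hr : 1 ≤ r) :
    IntegrableOn (fun t => Real.exp (-(x * t)) * W k (r⁻¹ * t)) (Ioi (0:ℝ)) := by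
  have hr0 : 0 < r := lt_of_lt_of_le one_pos hr
  apply Integrable.mono (exp_neg_integrableOn_Ioi 0 hx)
  · apply ContinuousOn.aestronglyMeasurable _ measurableSet_Ioi
    apply Continuous.continuousOn
    apply Continuous.mul (by continuity)
    apply continuous_finset_prod
    intro i _
    continuity
  · filter_upwards [ae_restrict_mem measurableSet_Ioi] with t ht
    have ht0 : (0:ℝ) < t := ht
    have h1 : 0 ≤ r⁻¹ * t := by positivity
    rw [Real.norm_eq_abs, Real.norm_eq_abs, abs_of_nonneg (by positivity : (0:ℝ) ≤ Real.exp (-x * t)),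
      abs_of_nonneg (mul_nonneg (Real.exp_nonneg _) (W_nonneg k h1))]
    rw [neg_mul]
    calc Real.exp (-(x * t)) * W k (r⁻¹ * t) ≤ Real.exp (-(x * t)) * 1 :=
          mul_le_mul_of_nonneg_left (W_le_one k h1) (Real.exp_nonneg _)
      _ = Real.exp (-(x * t)) := mul_one _

lemma integral_exp_neg_mul_Ioi {b : ℝ} (hb : 0 < b) :
    ∫ t in Ioi (0:ℝ), Real.exp (-(b * t)) = b⁻¹ := by
  have := integral_comp_mul_left_Ioi (fun u => Real.exp (-u)) 0 hb
  simp only [mul_zero, smul_eq_mul] at this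
  rw [this, integral_exp_neg_Ioi_zero, mul_one]

lemma gFun_eq_integral (k : ℕ) {x : ℝ} (hx : 0 < x) :
    gFun k x = ∫ t in Ioi (0:ℝ), Real.exp (-(x * t)) * W k t := by
  have hint : ∀ ℓ ∈ Finset.range (2 ^ k),
      IntegrableOn (fun t => tmSign ℓ * Real.exp (-((x + ℓ) * t))) (Ioi (0:ℝ)) := by
    intro ℓ _
    have hxl : 0 < x + (ℓ:ℝ) := by positivity
    have := (exp_neg_integrableOn_Ioi 0 hxl).const_mul (tmSign ℓ)
    simpa only [neg_mul, IntegrableOn] using this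
  have : (fun t : ℝ => Real.exp (-(x * t)) * W k t)
      = fun t => ∑ ℓ ∈ Finset.range (2 ^ k), tmSign ℓ * Real.exp (-((x + ℓ) * t)) := by
    funext t
    rw [← sum_tm_exp k t, Finset.mul_sum]
    congr 1; funext ℓ
    rw [show -((x + (ℓ:ℝ)) * t) = -(x*t) + -((ℓ:ℝ)*t) by ring, Real.exp_add]
    ring
  rw [this, integral_finset_sum _ hint]
  unfold gFun
  congr 1; funext ℓ
  rw [integral_const_mul, integral_exp_neg_mul_Ioi (by positivity : (0:ℝ) < x + ℓ)]
  rw [div_eq_mul_inv]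

lemma one_sub_exp_key {u r : ℝ} (hu : 0 ≤ u) (hr : 1 ≤ r) :
    1 - Real.exp (-u) ≤ r * (1 - Real.exp (-(r⁻¹ * u))) := by
  have hr0 : 0 < r := lt_of_lt_of_le one_pos hr
  have hθ0 : 0 ≤ r⁻¹ := by positivity
  have hθ1 : r⁻¹ ≤ 1 := by
    rw [inv_le_one_iff₀]; right; exact hr
  have hc := convexOn_exp.2 (Set.mem_univ (-u)) (Set.mem_univ (0:ℝ))
    hθ0 (by linarith : 0 ≤ 1 - r⁻¹) (by ring)
  simp only [smul_eq_mul, mul_zero, add_zero, Real.exp_zero, mul_one] at hc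
  -- hc : exp (r⁻¹ * -u) ≤ r⁻¹ * exp (-u) + (1 - r⁻¹)
  have e : r⁻¹ * -u = -(r⁻¹ * u) := by ring
  rw [e] at hc
  have := mul_le_mul_of_nonneg_left
    (by linarith : r⁻¹ * (1 - Real.exp (-u)) ≤ 1 - Real.exp (-(r⁻¹ * u))) hr0.le
  calc 1 - Real.exp (-u) = r * (r⁻¹ * (1 - Real.exp (-u))) := by
        field_simp
    _ ≤ r * (1 - Real.exp (-(r⁻¹ * u))) := this

lemma W_key (k : ℕ) {t r : ℝ} (ht : 0 ≤ t) (hr : 1 ≤ r) :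
    W k t ≤ r ^ k * W k (r⁻¹ * t) := by
  have hr0 : 0 < r := lt_of_lt_of_le one_pos hr
  have : W k t ≤ ∏ i ∈ Finset.range k, (r * (1 - Real.exp (-(2 ^ i * (r⁻¹ * t))))) := by
    apply Finset.prod_le_prod
    · intro i _
      have h1 : Real.exp (-(2 ^ i * t)) ≤ 1 := Real.exp_le_one_iff.2
        (by have : (0:ℝ) ≤ 2 ^ i * t := by positivity
            linarith)
      linarith
    · intro i _
      have hu : (0:ℝ) ≤ 2 ^ i * t := by positivity
      have := one_sub_exp_key hu hr
      calc 1 - Real.exp (-(2 ^ i * t)) ≤ r * (1 - Real.exp (-(r⁻¹ * (2 ^ i * t)))) := this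
        _ = r * (1 - Real.exp (-(2 ^ i * (r⁻¹ * t)))) := by ring_nf
  calc W k t ≤ _ := this
    _ = r ^ k * W k (r⁻¹ * t) := by
        rw [Finset.prod_mul_distrib, Finset.prod_const, Finset.card_range, W]

lemma gFun_pos (k : ℕ) {x : ℝ} (hx : 0 < x) : 0 < gFun k x := by
  rw [gFun_eq_integral k hx]
  have hnn : 0 ≤ᵐ[volume.restrict (Ioi (0:ℝ))] fun t => Real.exp (-(x * t)) * W k t := by
    filter_upwards [ae_restrict_mem measurableSet_Ioi] with t ht
    exact mul_nonneg (Real.exp_nonneg _) (W_nonneg k (le_of_lt ht))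
  have hint : IntegrableOn (fun t => Real.exp (-(x * t)) * W k t) (Ioi (0:ℝ)) := by
    have := integrable_exp_mul_W k hx (le_refl (1:ℝ))
    simpa using this
  rw [setIntegral_pos_iff_support_of_nonneg_ae hnn hint]
  have hsub : Ioi (0:ℝ) ⊆ Function.support (fun t => Real.exp (-(x * t)) * W k t) ∩ Ioi 0 := by
    intro t ht
    refine ⟨?_, ht⟩
    have : 0 < Real.exp (-(x * t)) * W k t := mul_pos (Real.exp_pos _) (W_pos k ht)
    exact ne_of_gt this
  calc (0:ENNReal) < volume (Ioi (0:ℝ)) := by rw [Real.volume_Ioi]; exact ENNReal.zero_lt_top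
    _ ≤ _ := measure_mono hsub

lemma gFun_shift_le (k : ℕ) {x : ℝ} (hx : 0 < x) :
    gFun k x ≤ ((x + 2 ^ k) / x) ^ (k + 1) * gFun k (x + 2 ^ k) := by
  set r : ℝ := (x + 2 ^ k) / x with hrdef
  have h2k : (0:ℝ) < 2 ^ k := by positivity
  have hy : 0 < x + 2 ^ k := by linarith
  have hr : 1 ≤ r := by
    rw [hrdef, le_div_iff₀ hx]; linarith
  have hr0 : 0 < r := lt_of_lt_of_le one_pos hr
  -- substitution: gFun k (x + 2^k) expressed via scaled integral
  have hsubst : gFun k (x + 2 ^ k)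
      = r⁻¹ * ∫ s in Ioi (0:ℝ), Real.exp (-(x * s)) * W k (r⁻¹ * s) := by
    rw [gFun_eq_integral k hy]
    have key : ∀ t : ℝ, Real.exp (-((x + 2 ^ k) * t)) * W k t
        = (fun s => Real.exp (-(x * s)) * W k (r⁻¹ * s)) (r * t) := by
      intro t
      simp only
      have e1 : x * (r * t) = (x + 2 ^ k) * t := by
        rw [hrdef]; field_simp
      have e2 : r⁻¹ * (r * t) = t := by
        field_simp
      rw [e1, e2]
    simp_rw [key]
    have h := integral_comp_mul_left_Ioi (fun s => Real.exp (-(x * s)) * W k (r⁻¹ * s)) 0 hr0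
    simp only [mul_zero, smul_eq_mul] at h
    exact h
  have hle : ∫ t in Ioi (0:ℝ), Real.exp (-(x * t)) * W k t
      ≤ ∫ t in Ioi (0:ℝ), Real.exp (-(x * t)) * (r ^ k * W k (r⁻¹ * t)) := by
    apply setIntegral_mono_on
    · simpa using integrable_exp_mul_W k hx (le_refl (1:ℝ))
    · have := (integrable_exp_mul_W k hx hr).const_mul (r ^ k)
      apply this.congr
      filter_upwards with t
      ring
    · exact measurableSet_Ioi
    · intro t ht
      have ht0 : (0:ℝ) < t := ht
      exact mul_le_mul_of_nonneg_left (W_key k ht0.le hr) (Real.exp_nonneg _)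
  have : gFun k x ≤ r ^ k * ∫ s in Ioi (0:ℝ), Real.exp (-(x * s)) * W k (r⁻¹ * s) := by
    rw [gFun_eq_integral k hx]
    calc _ ≤ _ := hle
      _ = r ^ k * ∫ s in Ioi (0:ℝ), Real.exp (-(x * s)) * W k (r⁻¹ * s) := by
          rw [← integral_const_mul]
          congr 1; funext t; ring
  calc gFun k x ≤ r ^ k * ∫ s in Ioi (0:ℝ), Real.exp (-(x * s)) * W k (r⁻¹ * s) := this
    _ = r ^ (k + 1) * (r⁻¹ * ∫ s in Ioi (0:ℝ), Real.exp (-(x * s)) * W k (r⁻¹ * s)) := by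
        rw [pow_succ]; field_simp
    _ = r ^ (k + 1) * gFun k (x + 2 ^ k) := by rw [← hsubst]

/-- for every `k ≥ 0` and every real `x ≥ (k+1)·2^{k+2}` one has
`g_k(x) < (4/3)·g_k(x + 2^k)`. -/
theorem stmt_6 (k : ℕ) (x : ℝ) (hx : ((k : ℝ) + 1) * 2 ^ (k + 2) ≤ x) :
    gFun k x < 4 / 3 * gFun k (x + 2 ^ k) := by
  have h2k : (0:ℝ) < 2 ^ k := by positivity
  have hk1 : (0:ℝ) < (k:ℝ) + 1 := by positivity
  have hxpos : 0 < x := by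
    have : (0:ℝ) < ((k : ℝ) + 1) * 2 ^ (k + 2) := by positivity
    linarith
  have hy : 0 < x + 2 ^ k := by linarith
  set r : ℝ := (x + 2 ^ k) / x with hrdef
  have hr1 : 1 ≤ r := by rw [hrdef, le_div_iff₀ hxpos]; linarith
  have hrbound : r ≤ 1 + 1 / (4 * ((k:ℝ) + 1)) := by
    rw [hrdef, div_le_iff₀ hxpos]
    have h1 : 2 ^ k * (4 * ((k:ℝ) + 1)) ≤ x := by
      calc 2 ^ k * (4 * ((k:ℝ) + 1)) = ((k : ℝ) + 1) * 2 ^ (k + 2) := by ring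
        _ ≤ x := hx
    rw [add_mul, one_mul]
    have : (2:ℝ) ^ k ≤ 1 / (4 * ((k:ℝ) + 1)) * x := by
      rw [div_mul_eq_mul_div, le_div_iff₀ (by positivity : (0:ℝ) < 4 * ((k:ℝ) + 1))]
      linarith
    linarith
  have hpow : r ^ (k + 1) < 4 / 3 := by
    have h1 : r ^ (k + 1) ≤ (1 + 1 / (4 * ((k:ℝ) + 1))) ^ (k + 1) :=
      pow_le_pow_left₀ (by linarith : (0:ℝ) ≤ r) hrbound _
    have h2 : (1 + 1 / (4 * ((k:ℝ) + 1))) ^ (k + 1)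
        ≤ Real.exp (1 / (4 * ((k:ℝ) + 1))) ^ (k + 1) := by
      apply pow_le_pow_left₀ (by positivity)
      linarith [Real.add_one_le_exp (1 / (4 * ((k:ℝ) + 1)))]
    have h3 : Real.exp (1 / (4 * ((k:ℝ) + 1))) ^ (k + 1)
        = Real.exp (((k:ℝ) + 1) * (1 / (4 * ((k:ℝ) + 1)))) := by
      rw [← Real.exp_nat_mul]
      push_cast
      ring_nf
    have h4 : ((k:ℝ) + 1) * (1 / (4 * ((k:ℝ) + 1))) = 1 / 4 := by
      field_simp
    have he : Real.exp (1 / 4 : ℝ) ^ 4 = Real.exp 1 := by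
      rw [← Real.exp_nat_mul]
      norm_num
    have h6 : Real.exp (1 / 4 : ℝ) ^ 4 < (4 / 3 : ℝ) ^ 4 := by
      rw [he]
      nlinarith [Real.exp_one_lt_d9]
    have h5 : Real.exp (1 / 4 : ℝ) < 4 / 3 := lt_of_pow_lt_pow_left₀ 4 (by norm_num) h6
    calc r ^ (k + 1) ≤ _ := h1
      _ ≤ _ := h2
      _ = Real.exp (1 / 4 : ℝ) := by rw [h3, h4]
      _ < 4 / 3 := h5
  have hgy : 0 < gFun k (x + 2 ^ k) := gFun_pos k hy
  calc gFun k x ≤ r ^ (k + 1) * gFun k (x + 2 ^ k) := gFun_shift_le k hxpos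
    _ < 4 / 3 * gFun k (x + 2 ^ k) := by
        apply mul_lt_mul_of_pos_right hpow hgy
end

section
/- Let r = ∑_{0≤j≤q} 2^{h_j} be a positive integer with h_0 > h_1 > ⋯ > h_q ≥ 0, let k be an integer with r < 2^k, and let x be a real number with x ≥ 2^{k+1}·(k+1). Then (−1)^q · ∑_{0 ≤ ℓ < r} ε_ℓ/(x+ℓ) > g_k(x − 2^k) > g_k(x) > 0. -/
open Finset

section Aux

def ds (n : ℕ) : ℕ := (Nat.digits 2 n).sum

lemma ds_two_mul_add (n b : ℕ) (hb : b < 2) : ds (2 * n + b) = ds n + b := by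
  rcases Nat.eq_zero_or_pos (2 * n + b) with h | h
  · have hn : n = 0 := by omega
    have hb0 : b = 0 := by omega
    subst hn; subst hb0; simp [ds]
  · unfold ds
    rw [Nat.digits_def' (by norm_num : 1 < 2) h]
    have h1 : (2 * n + b) % 2 = b := by omega
    have h2 : (2 * n + b) / 2 = n := by omega
    rw [h1, h2]
    simp [Nat.add_comm]

lemma ds_div_mod (ℓ : ℕ) : ds ℓ = ds (ℓ / 2) + ℓ % 2 := by
  conv_lhs => rw [← Nat.div_add_mod ℓ 2]
  exact ds_two_mul_add _ _ (Nat.mod_lt _ (by norm_num))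

lemma ds_add (e : ℕ) : ∀ m ℓ : ℕ, 2 ^ e ∣ m → ℓ < 2 ^ e → ds (m + ℓ) = ds m + ds ℓ := by
  induction e with
  | zero =>
    intro m ℓ _ hl
    interval_cases ℓ
    simp [ds]
  | succ e ih =>
    intro m ℓ hm hl
    obtain ⟨c, rfl⟩ := hm
    have he : 2 ^ (e + 1) = 2 * 2 ^ e := by ring
    have h1 : 2 ^ (e + 1) * c + ℓ = 2 * (2 ^ e * c + ℓ / 2) + ℓ % 2 := by
      have := Nat.div_add_mod ℓ 2
      rw [he]; ring_nf; omega
    have hl2 : ℓ / 2 < 2 ^ e := by omega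
    rw [h1, ds_two_mul_add _ _ (Nat.mod_lt _ (by norm_num)),
        ih _ _ ⟨c, rfl⟩ hl2]
    have h2 : ds (2 ^ (e + 1) * c) = ds (2 ^ e * c) := by
      have h3 : 2 ^ (e + 1) * c = 2 * (2 ^ e * c) + 0 := by ring
      rw [h3, ds_two_mul_add _ _ (by norm_num)]
      omega
    have h4 := ds_div_mod ℓ
    omega

lemma ds_pow (h : ℕ) : ds (2 ^ h) = 1 := by
  induction h with
  | zero => simp [ds]
  | succ h ih =>
    have : 2 ^ (h + 1) = 2 * 2 ^ h + 0 := by ring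
    rw [this, ds_two_mul_add _ _ (by norm_num)]
    omega

lemma tmSign_eq (n : ℕ) : tmSign n = (-1 : ℝ) ^ ds n := rfl

lemma tmSign_zero : tmSign 0 = 1 := by simp [tmSign]

lemma tmSign_add_s8 {e m ℓ : ℕ} (hm : 2 ^ e ∣ m) (hl : ℓ < 2 ^ e) :
    tmSign (m + ℓ) = tmSign m * tmSign ℓ := by
  rw [tmSign_eq, tmSign_eq, tmSign_eq, ds_add e m ℓ hm hl, pow_add]

lemma tmSign_pow (h : ℕ) : tmSign (2 ^ h) = -1 := by
  rw [tmSign_eq, ds_pow]; norm_num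

noncomputable def Gp (m p : ℕ) (y : ℝ) : ℝ :=
  ∑ ℓ ∈ range (2 ^ m), tmSign ℓ * ((y + ℓ) ^ p)⁻¹

lemma gFun_eq (k : ℕ) (x : ℝ) : gFun k x = Gp k 1 x := by
  simp [gFun, Gp, div_eq_mul_inv]

lemma Gp_zero (p : ℕ) (y : ℝ) : Gp 0 p y = (y ^ p)⁻¹ := by
  simp [Gp, tmSign_zero]

lemma Gp_succ (m p : ℕ) (y : ℝ) : Gp (m + 1) p y = Gp m p y - Gp m p (y + 2 ^ m) := by
  unfold Gp
  have h2 : 2 ^ (m + 1) = 2 ^ m + 2 ^ m := by ring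
  rw [h2, Finset.sum_range_add]
  have : ∀ i ∈ range (2 ^ m),
      tmSign (2 ^ m + i) * ((y + ((2 ^ m + i : ℕ) : ℝ)) ^ p)⁻¹
      = -(tmSign i * ((y + 2 ^ m + i) ^ p)⁻¹) := by
    intro i hi
    rw [tmSign_add_s8 (dvd_refl _) (mem_range.mp hi), tmSign_pow]
    push_cast
    ring_nf
  rw [Finset.sum_congr rfl this, Finset.sum_neg_distrib]
  ring

lemma hasDerivAt_Gp (m p : ℕ) (y : ℝ) (hy : 0 < y) :
    HasDerivAt (Gp m (p + 1)) (-((p : ℝ) + 1) * Gp m (p + 2) y) y := by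
  have H : ∀ ℓ ∈ range (2 ^ m), HasDerivAt (fun z : ℝ => tmSign ℓ * ((z + ℓ) ^ (p + 1))⁻¹)
      (tmSign ℓ * (-((p : ℝ) + 1) * ((y + ℓ) ^ (p + 2))⁻¹)) y := by
    intro ℓ _
    have hne : y + (ℓ : ℝ) ≠ 0 := by positivity
    have h1 : HasDerivAt (fun z : ℝ => z + (ℓ : ℝ)) 1 y := (hasDerivAt_id y).add_const _
    have h2 := h1.pow (p + 1)
    have h3 := h2.inv (pow_ne_zero _ hne)
    have heq : -(((p : ℝ) + 1) * (y + ℓ) ^ (p + 1 - 1) * 1) / ((y + ℓ) ^ (p + 1)) ^ 2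
        = -((p : ℝ) + 1) * ((y + ℓ) ^ (p + 2))⁻¹ := by
      have hsimp : p + 1 - 1 = p := rfl
      rw [hsimp]
      rw [div_eq_iff (by positivity)]
      field_simp
      ring
    have h4 := h3.const_mul (tmSign ℓ)
    refine h4.congr_deriv ?_
    rw [show p + 1 - 1 = p from rfl]
    push_cast [Pi.pow_apply]
    field_simp
    ring
  have h5 := HasDerivAt.fun_sum H
  have : ∑ ℓ ∈ range (2 ^ m), tmSign ℓ * (-((p : ℝ) + 1) * ((y + ℓ) ^ (p + 2))⁻¹)
      = -((p : ℝ) + 1) * Gp m (p + 2) y := by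
    rw [Gp, Finset.mul_sum]
    exact Finset.sum_congr rfl fun ℓ _ => by ring
  rw [this] at h5
  exact h5

lemma Gp_mvt (m p : ℕ) {y z : ℝ} (hy : 0 < y) (hyz : y < z) :
    ∃ ξ, y < ξ ∧ ξ < z ∧
      Gp m (p + 1) y - Gp m (p + 1) z = (z - y) * (((p : ℝ) + 1) * Gp m (p + 2) ξ) := by
  obtain ⟨ξ, hξ, heq⟩ := exists_hasDerivAt_eq_slope (Gp m (p + 1))
    (fun t => -((p : ℝ) + 1) * Gp m (p + 2) t) hyz
    (fun t ht => (hasDerivAt_Gp m p t (lt_of_lt_of_le hy ht.1)).continuousAt.continuousWithinAt)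
    (fun t ht => hasDerivAt_Gp m p t (hy.trans ht.1))
  refine ⟨ξ, hξ.1, hξ.2, ?_⟩
  have hz : z - y > 0 := by linarith [hξ.1, hξ.2]
  rw [eq_div_iff (by linarith : z - y ≠ 0)] at heq
  nlinarith [heq]

lemma Gp_pos : ∀ m p : ℕ, ∀ y : ℝ, 0 < y → 0 < Gp m (p + 1) y := by
  intro m
  induction m with
  | zero =>
    intro p y hy
    rw [Gp_zero]
    positivity
  | succ m ih =>
    intro p y hy
    rw [Gp_succ]
    have h2m : (0 : ℝ) < 2 ^ m := by positivity
    obtain ⟨ξ, h1, h2, heq⟩ := Gp_mvt m p hy (by linarith : y < y + 2 ^ m)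
    have hpos : 0 < Gp m (p + 2) ξ := ih (p + 1) ξ (hy.trans h1)
    have hp1 : (0 : ℝ) < (p : ℝ) + 1 := by positivity
    have hprod : 0 < (y + 2 ^ m - y) * (((p : ℝ) + 1) * Gp m (p + 2) ξ) := by
      apply mul_pos (by linarith) (mul_pos hp1 hpos)
    linarith

lemma Gp_lt (m p : ℕ) {y z : ℝ} (hy : 0 < y) (hyz : y < z) :
    Gp m (p + 1) z < Gp m (p + 1) y := by
  obtain ⟨ξ, h1, h2, heq⟩ := Gp_mvt m p hy hyz
  have hpos : 0 < Gp m (p + 2) ξ := Gp_pos m (p + 1) ξ (hy.trans h1)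
  have hp1 : (0 : ℝ) < (p : ℝ) + 1 := by positivity
  have hprod : 0 < (z - y) * (((p : ℝ) + 1) * Gp m (p + 2) ξ) := by
    apply mul_pos (by linarith) (mul_pos hp1 hpos)
  linarith

lemma Gp_diff_le (m p : ℕ) {y z : ℝ} (hy : 0 < y) (hyz : y < z) :
    Gp m (p + 1) y - Gp m (p + 1) z ≤ (z - y) * (((p : ℝ) + 1) * Gp m (p + 2) y) := by
  obtain ⟨ξ, h1, h2, heq⟩ := Gp_mvt m p hy hyz
  have hlt : Gp m (p + 2) ξ < Gp m (p + 2) y := Gp_lt m (p + 1) hy h1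
  have hp1 : (0 : ℝ) < (p : ℝ) + 1 := by positivity
  have := mul_le_mul_of_nonneg_left (mul_le_mul_of_nonneg_left hlt.le hp1.le)
    (by linarith : (0:ℝ) ≤ z - y)
  linarith

lemma Gp_le_diff (m p : ℕ) {y z : ℝ} (hy : 0 < y) (hyz : y < z) :
    (z - y) * (((p : ℝ) + 1) * Gp m (p + 2) z) ≤ Gp m (p + 1) y - Gp m (p + 1) z := by
  obtain ⟨ξ, h1, h2, heq⟩ := Gp_mvt m p hy hyz
  have hlt : Gp m (p + 2) z < Gp m (p + 2) ξ := Gp_lt m (p + 1) (hy.trans h1) h2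
  have hp1 : (0 : ℝ) < (p : ℝ) + 1 := by positivity
  have := mul_le_mul_of_nonneg_left (mul_le_mul_of_nonneg_left hlt.le hp1.le)
    (by linarith : (0:ℝ) ≤ z - y)
  linarith

lemma Gp_index_le (y : ℝ) (hy : 0 < y) : ∀ {a b : ℕ}, a ≤ b → Gp b 1 y ≤ Gp a 1 y := by
  intro a b hab
  induction b, hab using Nat.le_induction with
  | base => exact le_refl _
  | succ b hab ih =>
    rw [Gp_succ]
    have h2b : (0 : ℝ) < 2 ^ b := by positivity
    have hp : 0 < Gp b 1 (y + 2 ^ b) := Gp_pos b 0 (y + 2 ^ b) (by linarith)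
    calc Gp b 1 y - Gp b 1 (y + 2 ^ b) ≤ Gp b 1 y := by linarith
      _ ≤ Gp a 1 y := ih

noncomputable def Ac (m p : ℕ) : ℝ := ∏ i ∈ range m, ((2 : ℝ) ^ i * ((p : ℝ) + i))

lemma Ac_pos (m p : ℕ) : 0 < Ac m (p + 1) := by
  apply Finset.prod_pos
  intro i _
  positivity

lemma Ac_succ (m p : ℕ) : Ac (m + 1) (p + 1) = 2 ^ m * ((p : ℝ) + 1) * Ac m (p + 2) := by
  rw [Ac, Finset.prod_range_succ', Ac]
  push_cast
  have : ∀ i ∈ range m, (2 : ℝ) ^ (i + 1) * (((p : ℝ) + 1) + (i + 1))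
      = 2 * ((2 : ℝ) ^ i * (((p : ℝ) + 2) + i)) := by
    intro i _
    ring
  rw [Finset.prod_congr rfl this, Finset.prod_mul_distrib, Finset.prod_const, card_range]
  push_cast
  ring

lemma Ac_succ' (m p : ℕ) : Ac (m + 1) p = Ac m p * (2 ^ m * ((p : ℝ) + m)) :=
  Finset.prod_range_succ _ _

lemma Ac_two (a : ℕ) : Ac a 2 = ((a : ℝ) + 1) * Ac a 1 := by
  induction a with
  | zero => simp [Ac]
  | succ a ih =>
    rw [Ac_succ', Ac_succ', ih]
    push_cast
    ring

lemma Gp_upper : ∀ m p : ℕ, ∀ y : ℝ, 0 < y → Gp m (p + 1) y ≤ Ac m (p + 1) / y ^ (p + 1 + m) := by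
  intro m
  induction m with
  | zero =>
    intro p y hy
    rw [Gp_zero]
    simp [Ac]
  | succ m ih =>
    intro p y hy
    rw [Gp_succ]
    have h2m : (0 : ℝ) < 2 ^ m := by positivity
    calc Gp m (p + 1) y - Gp m (p + 1) (y + 2 ^ m)
        ≤ (y + 2 ^ m - y) * (((p : ℝ) + 1) * Gp m (p + 2) y) :=
          Gp_diff_le m p hy (by linarith)
      _ ≤ (2 : ℝ) ^ m * (((p : ℝ) + 1) * (Ac m (p + 2) / y ^ (p + 2 + m))) := by
          have hb : Gp m (p + 2) y ≤ Ac m (p + 2) / y ^ (p + 2 + m) := by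
            have := ih (p + 1) y hy
            convert this using 3 <;> push_cast <;> ring_nf
          rw [show y + 2 ^ m - y = (2:ℝ) ^ m by ring]
          gcongr
      _ = Ac (m + 1) (p + 1) / y ^ (p + 1 + (m + 1)) := by
          rw [Ac_succ]
          rw [show p + 1 + (m + 1) = p + 2 + m by omega]
          ring

lemma Gp_lower : ∀ m p : ℕ, ∀ y : ℝ, 0 < y →
    Ac m (p + 1) / (y + 2 ^ m) ^ (p + 1 + m) ≤ Gp m (p + 1) y := by
  intro m
  induction m with
  | zero =>
    intro p y hy
    rw [Gp_zero]
    simp [Ac]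
    apply inv_anti₀ (by positivity)
    apply pow_le_pow_left₀ (by linarith) (by linarith)
  | succ m ih =>
    intro p y hy
    rw [Gp_succ]
    have h2m : (0 : ℝ) < 2 ^ m := by positivity
    have hy2 : 0 < y + 2 ^ m := by linarith
    calc Ac (m + 1) (p + 1) / (y + 2 ^ (m + 1)) ^ (p + 1 + (m + 1))
        ≤ (2 : ℝ) ^ m * (((p : ℝ) + 1) * (Ac m (p + 2) / ((y + 2 ^ m) + 2 ^ m) ^ (p + 2 + m))) := by
          rw [Ac_succ]
          rw [show (y + 2 ^ m) + 2 ^ m = y + 2 ^ (m + 1) by ring]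
          rw [show p + 1 + (m + 1) = p + 2 + m by omega]
          apply le_of_eq
          ring
      _ ≤ (y + 2 ^ m - y) * (((p : ℝ) + 1) * Gp m (p + 2) (y + 2 ^ m)) := by
          have hb : Ac m (p + 2) / ((y + 2 ^ m) + 2 ^ m) ^ (p + 2 + m) ≤ Gp m (p + 2) (y + 2 ^ m) := by
            have := ih (p + 1) (y + 2 ^ m) hy2
            convert this using 3 <;> push_cast <;> ring_nf
          rw [show y + 2 ^ m - y = (2:ℝ) ^ m by ring]
          gcongr
      _ ≤ Gp m (p + 1) y - Gp m (p + 1) (y + 2 ^ m) :=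
          Gp_le_diff m p hy (by linarith : y < y + 2 ^ m)

lemma exp_quarter_lt_two : Real.exp (1 / 4 : ℝ) < 2 := by
  have h4 : Real.exp (1 / 4 : ℝ) ^ (4 : ℕ) = Real.exp 1 := by
    rw [← Real.exp_nat_mul]; norm_num
  have h1 : Real.exp 1 < 2.7182818286 := Real.exp_one_lt_d9
  have h2 : Real.exp (1 / 4 : ℝ) ^ (4 : ℕ) < (2 : ℝ) ^ (4 : ℕ) := by
    rw [h4]; norm_num; linarith
  exact lt_of_pow_lt_pow_left₀ 4 (by norm_num) h2

lemma exp_one_lt_three : Real.exp (1 : ℝ) < 3 := by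
  have h1 : Real.exp 1 < 2.7182818286 := Real.exp_one_lt_d9
  linarith

lemma one_add_pow_le_exp {t : ℝ} (n : ℕ) (ht : 0 ≤ t) {c : ℝ} (h : (n : ℝ) * t ≤ c) :
    (1 + t) ^ n ≤ Real.exp c := by
  calc (1 + t) ^ n ≤ (Real.exp t) ^ n := by
        apply pow_le_pow_left₀ (by linarith)
        linarith [Real.add_one_le_exp t]
    _ = Real.exp ((n : ℝ) * t) := by rw [Real.exp_nat_mul]
    _ ≤ Real.exp c := Real.exp_le_exp.mpr h

lemma pow_add_le {u d C : ℝ} (hu : 0 < u) (hd : 0 ≤ d) (n : ℕ)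
    (h : (1 + d / u) ^ n ≤ C) : (u + d) ^ n ≤ C * u ^ n := by
  have he : u + d = u * (1 + d / u) := by field_simp
  rw [he, mul_pow]
  have hun : (0 : ℝ) ≤ u ^ n := by positivity
  calc u ^ n * (1 + d / u) ^ n ≤ u ^ n * C := by
        apply mul_le_mul_of_nonneg_left h hun
    _ = C * u ^ n := by ring

lemma Ac_ratio (a k : ℕ) (hak : a ≤ k) (hk : 1 ≤ k) :
    Ac k 1 ≤ Ac a 1 * ((2 : ℝ) ^ (k - 1) * k) ^ (k - a) := by
  rw [Ac, Ac, ← Finset.prod_range_mul_prod_Ico _ hak]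
  have hnn : (0:ℝ) ≤ ∏ i ∈ range a, ((2 : ℝ) ^ i * (((1:ℕ) : ℝ) + i)) := by
    apply Finset.prod_nonneg; intro i _; positivity
  have h1 : ∏ i ∈ Ico a k, ((2 : ℝ) ^ i * (((1:ℕ) : ℝ) + i))
      ≤ ((2 : ℝ) ^ (k - 1) * k) ^ (k - a) := by
    rw [← Nat.card_Ico a k, ← Finset.prod_const]
    apply Finset.prod_le_prod
    · intro i _; positivity
    · intro i hi
      obtain ⟨hai, hik⟩ := Finset.mem_Ico.mp hi
      have h2 : (2 : ℝ) ^ i ≤ 2 ^ (k - 1) := by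
        apply pow_le_pow_right₀ (by norm_num)
        omega
      have h3 : ((1:ℕ) : ℝ) + i ≤ (k : ℝ) := by
        have h4 : (i : ℝ) + 1 ≤ k := by exact_mod_cast hik
        push_cast
        linarith
      apply mul_le_mul h2 h3 (by positivity) (by positivity)
  calc (∏ i ∈ range a, ((2:ℝ) ^ i * (((1:ℕ):ℝ) + i))) * ∏ i ∈ Ico a k, ((2:ℝ) ^ i * (((1:ℕ):ℝ) + i))
      ≤ (∏ i ∈ range a, ((2:ℝ) ^ i * (((1:ℕ):ℝ) + i))) * ((2:ℝ) ^ (k - 1) * k) ^ (k - a) :=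
        mul_le_mul_of_nonneg_left h1 hnn

lemma Gp1_upper (m : ℕ) (y : ℝ) (hy : 0 < y) : Gp m 1 y ≤ Ac m 1 / y ^ (m + 1) := by
  have h := Gp_upper m 0 y hy
  rw [show 0 + 1 + m = m + 1 by omega] at h
  exact h

lemma Gp2_upper (m : ℕ) (y : ℝ) (hy : 0 < y) : Gp m 2 y ≤ Ac m 2 / y ^ (m + 2) := by
  have h := Gp_upper m 1 y hy
  rw [show 1 + 1 + m = m + 2 by omega] at h
  exact h

lemma Gp1_lower (m : ℕ) (y : ℝ) (hy : 0 < y) :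
    Ac m 1 / (y + 2 ^ m) ^ (m + 1) ≤ Gp m 1 y := by
  have h := Gp_lower m 0 y hy
  rw [show 0 + 1 + m = m + 1 by omega] at h
  exact h

-- a convenient bound: (v)^n ≤ 3 * y^n whenever v ≤ y + 2^(k+1), n*2^(k+1) ≤ y
lemma pow_le_three_mul {y v : ℝ} (n : ℕ) (hy : 0 < y) (hv0 : 0 ≤ v)
    (hv : v ≤ y + 2 ^ (k : ℕ)) (hn : (n : ℝ) * 2 ^ (k : ℕ) ≤ y) :
    v ^ n ≤ 3 * y ^ n := by
  have h2 : (0 : ℝ) < 2 ^ (k : ℕ) := by positivity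
  have ht : (0 : ℝ) ≤ 2 ^ (k : ℕ) / y := by positivity
  have hnt : (n : ℝ) * (2 ^ (k : ℕ) / y) ≤ 1 := by
    rw [mul_div_assoc', div_le_one hy]
    exact hn
  have hpow : (1 + 2 ^ (k : ℕ) / y) ^ n ≤ Real.exp 1 := one_add_pow_le_exp n ht hnt
  have h3 : (y + 2 ^ (k : ℕ)) ^ n ≤ Real.exp 1 * y ^ n := pow_add_le hy h2.le n hpow
  have h4 : v ^ n ≤ (y + 2 ^ (k : ℕ)) ^ n := pow_le_pow_left₀ hv0 hv n
  have h5 : (0:ℝ) ≤ y ^ n := by positivity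
  have h6 := mul_le_mul_of_nonneg_right exp_one_lt_three.le h5
  linarith

lemma base0 (h k : ℕ) (hhk : h < k) (x : ℝ) (hx : 2 ^ (k + 1) * ((k : ℝ) + 1) ≤ x) :
    Gp k 1 (x - 2 ^ k) < Gp h 1 x := by
  have hk1 : 1 ≤ k := by omega
  have hK1 : (1 : ℝ) ≤ (k : ℝ) := by exact_mod_cast hk1
  have hHK : (h : ℝ) + 1 ≤ (k : ℝ) := by exact_mod_cast hhk
  have h2k : (0 : ℝ) < 2 ^ k := by positivity
  have e1 : (2 : ℝ) ^ (k + 1) = 2 ^ k * 2 := pow_succ 2 k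
  have hx0 : (0 : ℝ) < x := by
    have hp : (0:ℝ) < 2 ^ (k + 1) * ((k : ℝ) + 1) := by positivity
    linarith
  set y := x - 2 ^ k with hy_def
  have hy : 2 ^ k * (2 * (k : ℝ) + 1) ≤ y := by
    have e2 : (2 : ℝ) ^ k * 2 * ((k : ℝ) + 1) - 2 ^ k = 2 ^ k * (2 * k + 1) := by ring
    rw [e1] at hx
    rw [hy_def]
    linarith
  have hy0 : (0 : ℝ) < y := by
    have hp : (0:ℝ) < 2 ^ k * (2 * (k : ℝ) + 1) := by positivity
    linarith
  have hA1h : (0 : ℝ) < Ac h 1 := Ac_pos h 0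
  have hA1k : (0 : ℝ) < Ac k 1 := Ac_pos k 0
  have hup : Gp k 1 y ≤ Ac k 1 / y ^ (k + 1) := Gp1_upper k y hy0
  have hlo : Ac h 1 / (x + 2 ^ h) ^ (h + 1) ≤ Gp h 1 x := Gp1_lower h x hx0
  -- step 1 : x + 2^h ≤ y + 2^(k+1)
  have h2h : (2 : ℝ) ^ h ≤ 2 ^ k := pow_le_pow_right₀ (by norm_num) (le_of_lt hhk)
  have hstep1 : x + 2 ^ h ≤ y + 2 ^ (k + 1) := by
    rw [hy_def, e1]; linarith
  -- step 2 : (x + 2^h)^(h+1) ≤ 3 * y^(h+1)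
  have e3 : (2 : ℝ) ^ (k + 1) = 2 ^ (k : ℕ) * 2 := e1
  have hstep2 : (x + 2 ^ h) ^ (h + 1) ≤ 3 * y ^ (h + 1) := by
    apply pow_le_three_mul (k := k + 1) (h + 1) hy0 (by positivity) hstep1
    -- ((h:ℕ)+1 : ℝ) * 2^(k+1) ≤ y
    push_cast
    rw [e1]
    have h8 : 2 * ((h:ℝ) + 1) ≤ 2 * (k:ℝ) + 1 := by linarith
    have h9 := mul_le_mul_of_nonneg_right h8 h2k.le
    linarith [hy]
  -- step 4 : 3 * Ac k 1 < Ac h 1 * y ^ (k - h)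
  have hAr : Ac k 1 ≤ Ac h 1 * ((2 : ℝ) ^ (k - 1) * k) ^ (k - h) := Ac_ratio h k hhk.le hk1
  have e4 : (2 : ℝ) ^ k = 2 * 2 ^ (k - 1) := by
    conv_lhs => rw [show k = (k - 1) + 1 by omega]
    rw [pow_succ]
    ring
  have hCpos : (0 : ℝ) < (2 : ℝ) ^ (k - 1) * k := by positivity
  have hyC : 4 * ((2 : ℝ) ^ (k - 1) * k) ≤ y := by
    rw [e4] at hy
    have hp : (0:ℝ) ≤ 2 ^ (k - 1) := by positivity
    linarith
  have hpowC : (4 * ((2 : ℝ) ^ (k - 1) * k)) ^ (k - h) ≤ y ^ (k - h) :=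
    pow_le_pow_left₀ (by positivity) hyC _
  have h4pow : (4 : ℝ) ≤ 4 ^ (k - h) := by
    calc (4 : ℝ) = 4 ^ 1 := (pow_one 4).symm
      _ ≤ 4 ^ (k - h) := pow_le_pow_right₀ (by norm_num) (by omega)
  have hCn : (0 : ℝ) ≤ ((2 : ℝ) ^ (k - 1) * k) ^ (k - h) := by positivity
  have hstep4 : 3 * Ac k 1 < Ac h 1 * y ^ (k - h) := by
    have hposM : (0:ℝ) < Ac h 1 * ((2:ℝ) ^ (k - 1) * k) ^ (k - h) := by
      exact mul_pos hA1h (pow_pos hCpos _)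
    have H1 := mul_le_mul_of_nonneg_left hpowC hA1h.le
    rw [mul_pow] at H1
    have H2 : 0 ≤ Ac h 1 * ((2:ℝ) ^ (k - 1) * k) ^ (k - h) * ((4:ℝ) ^ (k - h) - 4) :=
      mul_nonneg hposM.le (sub_nonneg.mpr h4pow)
    linarith [hAr]
  -- conclude
  have hkey : Ac k 1 / y ^ (k + 1) < Ac h 1 / (x + 2 ^ h) ^ (h + 1) := by
    rw [div_lt_div_iff₀ (by positivity) (by positivity)]
    have epow : y ^ (k + 1) = y ^ (h + 1) * y ^ (k - h) := by
      rw [← pow_add]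
      congr 1
      omega
    calc Ac k 1 * (x + 2 ^ h) ^ (h + 1) ≤ Ac k 1 * (3 * y ^ (h + 1)) := by
          apply mul_le_mul_of_nonneg_left hstep2 hA1k.le
      _ < Ac h 1 * y ^ (k + 1) := by
          rw [epow]
          have h10 := mul_lt_mul_of_pos_right hstep4 (pow_pos hy0 (h + 1))
          linarith
  calc Gp k 1 y ≤ Ac k 1 / y ^ (k + 1) := hup
    _ < Ac h 1 / (x + 2 ^ h) ^ (h + 1) := hkey
    _ ≤ Gp h 1 x := hlo

lemma star (a b k : ℕ) (hab : a < b) (hbk : b < k) (x u : ℝ)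
    (hx : 2 ^ (k + 1) * ((k : ℝ) + 1) ≤ x) (hxu : x ≤ u) (hub : u + 2 ^ b ≤ x + 2 ^ k) :
    Gp k 1 (x - 2 ^ k) < Gp a 1 (u + 2 ^ b) - Gp b 1 u := by
  have hk2 : 2 ≤ k := by omega
  have hK1 : (1 : ℝ) ≤ (k : ℝ) := by exact_mod_cast (by omega : 1 ≤ k)
  have hAK : (a : ℝ) + 2 ≤ (k : ℝ) := by exact_mod_cast (by omega : a + 2 ≤ k)
  have hBK : (b : ℝ) + 1 ≤ (k : ℝ) := by exact_mod_cast hbk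
  have h2k : (0 : ℝ) < 2 ^ k := by positivity
  have e1 : (2 : ℝ) ^ (k + 1) = 2 ^ k * 2 := pow_succ 2 k
  have hx0 : (0 : ℝ) < x := by
    have hp : (0:ℝ) < 2 ^ (k + 1) * ((k : ℝ) + 1) := by positivity
    linarith
  have hu0 : (0 : ℝ) < u := lt_of_lt_of_le hx0 hxu
  have h2b : (0 : ℝ) < 2 ^ b := by positivity
  have h2a : (0 : ℝ) < 2 ^ a := by positivity
  have h2a1 : (0 : ℝ) < 2 ^ (a + 1) := by positivity
  set y := x - 2 ^ k with hy_def
  have hy : 2 ^ k * (2 * (k : ℝ) + 1) ≤ y := by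
    have e2 : (2 : ℝ) ^ k * 2 * ((k : ℝ) + 1) - 2 ^ k = 2 ^ k * (2 * k + 1) := by ring
    rw [e1] at hx
    rw [hy_def]
    linarith
  have hy0 : (0 : ℝ) < y := by
    have hp : (0:ℝ) < 2 ^ k * (2 * (k : ℝ) + 1) := by positivity
    linarith
  have hA1 : (0 : ℝ) < Ac a 1 := Ac_pos a 0
  have hA1k : (0 : ℝ) < Ac k 1 := Ac_pos k 0
  -- pow comparison facts
  have e4 : (2 : ℝ) ^ k = 2 * 2 ^ (k - 1) := by
    conv_lhs => rw [show k = (k - 1) + 1 by omega]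
    rw [pow_succ]
    ring
  have h2b_le : (2 : ℝ) ^ b ≤ 2 ^ (k - 1) := pow_le_pow_right₀ (by norm_num) (by omega)
  have h2a1_le : (2 : ℝ) ^ (a + 1) ≤ 2 ^ (k - 1) := pow_le_pow_right₀ (by norm_num) (by omega)
  have h2a1_le_b : (2 : ℝ) ^ (a + 1) ≤ 2 ^ b := pow_le_pow_right₀ (by norm_num) (by omega)
  -- hA : peel one level
  have hA : Gp b 1 u ≤ Gp a 1 u - Gp a 1 (u + 2 ^ a) := by
    have h1 : Gp b 1 u ≤ Gp (a + 1) 1 u := Gp_index_le u hu0 (by omega : a + 1 ≤ b)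
    rwa [Gp_succ] at h1
  -- hC : difference bound
  have hC : Gp a 1 u - Gp a 1 (u + 2 ^ b) ≤ 2 ^ b * Gp a 2 u := by
    have h2 := Gp_diff_le a 0 hu0 (by linarith : u < u + 2 ^ b)
    norm_num at h2
    linarith
  have hD : Gp a 2 u ≤ Ac a 2 / u ^ (a + 2) := Gp2_upper a u hu0
  -- hu4 : 4 * 2^b * (a+1) ≤ u
  have hu4 : 4 * ((2 : ℝ) ^ b * ((a : ℝ) + 1)) ≤ u := by
    have : 4 * ((2 : ℝ) ^ b * ((a : ℝ) + 1)) ≤ 4 * (2 ^ (k - 1) * ((k : ℝ) + 1)) := by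
      apply mul_le_mul_of_nonneg_left _ (by norm_num)
      apply mul_le_mul h2b_le (by linarith) (by linarith) (by positivity)
    have e5 : 4 * ((2:ℝ) ^ (k - 1) * ((k : ℝ) + 1)) = 2 ^ (k + 1) * ((k : ℝ) + 1) := by
      rw [e1, e4]; ring
    linarith [hx, hxu]
  -- hC2
  have hC2 : Gp a 1 u - Gp a 1 (u + 2 ^ b) ≤ Ac a 1 / (4 * u ^ (a + 1)) := by
    have h3 : (2 : ℝ) ^ b * (Ac a 2 / u ^ (a + 2)) ≤ Ac a 1 / (4 * u ^ (a + 1)) := by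
      rw [Ac_two, mul_div_assoc', div_le_div_iff₀ (by positivity) (by positivity)]
      have e6 : u ^ (a + 2) = u ^ (a + 1) * u := pow_succ u (a + 1)
      rw [e6]
      have hint := mul_nonneg (mul_nonneg hA1.le (pow_nonneg hu0.le (a + 1)))
        (sub_nonneg.mpr hu4)
      nlinarith [hint]
    have h4 : (2 : ℝ) ^ b * Gp a 2 u ≤ 2 ^ b * (Ac a 2 / u ^ (a + 2)) :=
      mul_le_mul_of_nonneg_left hD h2b.le
    linarith
  -- hE : lower bound for Gp a 1 (u + 2^a)
  have hE : Ac a 1 / (u + 2 ^ (a + 1)) ^ (a + 1) ≤ Gp a 1 (u + 2 ^ a) := by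
    have h5 := Gp1_lower a (u + 2 ^ a) (by linarith)
    rw [show u + 2 ^ a + 2 ^ a = u + 2 ^ (a + 1) by ring] at h5
    exact h5
  -- hF1 : (u + 2^(a+1))^(a+1) ≤ 2 * u^(a+1)
  have hF1 : (u + 2 ^ (a + 1)) ^ (a + 1) ≤ 2 * u ^ (a + 1) := by
    have ht : (0 : ℝ) ≤ 2 ^ (a + 1) / u := by positivity
    have hnt : (((a : ℕ) + 1 : ℕ) : ℝ) * (2 ^ (a + 1) / u) ≤ 1 / 4 := by
      push_cast
      rw [mul_div_assoc', div_le_div_iff₀ hu0 (by norm_num)]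
      -- (a+1) * 2^(a+1) * 4 ≤ u * 1
      have hmono := mul_le_mul_of_nonneg_right h2a1_le_b (by positivity : (0:ℝ) ≤ (a:ℝ) + 1)
      linarith [hu4]
    have hpow : (1 + 2 ^ (a + 1) / u) ^ (a + 1) ≤ Real.exp (1 / 4 : ℝ) :=
      one_add_pow_le_exp (a + 1) ht hnt
    have h6 : (u + 2 ^ (a + 1)) ^ (a + 1) ≤ Real.exp (1 / 4 : ℝ) * u ^ (a + 1) :=
      pow_add_le hu0 h2a1.le (a + 1) hpow
    have h11 := mul_le_mul_of_nonneg_right exp_quarter_lt_two.le (pow_nonneg hu0.le (a + 1))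
    linarith
  -- hP : Ac a 1 / (2 u^(a+1)) ≤ P1
  have hP : Ac a 1 / (2 * u ^ (a + 1)) ≤ Ac a 1 / (u + 2 ^ (a + 1)) ^ (a + 1) :=
    div_le_div_of_nonneg_left hA1.le (by positivity) hF1
  -- hQ : (u + 2^(a+1))^(a+1) ≤ 3 * y^(a+1)
  have hQ : (u + 2 ^ (a + 1)) ^ (a + 1) ≤ 3 * y ^ (a + 1) := by
    have h7 : u + 2 ^ (a + 1) ≤ y + 2 ^ (k + 1) := by
      rw [hy_def, e1]
      linarith
    apply pow_le_three_mul (k := k + 1) (a + 1) hy0 (by positivity) h7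
    push_cast
    rw [e1]
    have h8 : 2 * ((a:ℝ) + 1) ≤ 2 * (k:ℝ) + 1 := by linarith
    have h9 := mul_le_mul_of_nonneg_right h8 h2k.le
    linarith [hy]
  have hQ' : Ac a 1 / (3 * y ^ (a + 1)) ≤ Ac a 1 / (u + 2 ^ (a + 1)) ^ (a + 1) :=
    div_le_div_of_nonneg_left hA1.le (by positivity) hQ
  -- hG : Ac k 1 / y^(k+1) < Ac a 1 / (6 * y^(a+1))
  have hAr : Ac k 1 ≤ Ac a 1 * ((2 : ℝ) ^ (k - 1) * k) ^ (k - a) :=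
    Ac_ratio a k (by omega) (by omega)
  have hCpos : (0 : ℝ) < (2 : ℝ) ^ (k - 1) * k := by positivity
  have hyC : 4 * ((2 : ℝ) ^ (k - 1) * k) ≤ y := by
    rw [e4] at hy
    have hp : (0:ℝ) ≤ 2 ^ (k - 1) := by positivity
    linarith
  have hpowC : (4 * ((2 : ℝ) ^ (k - 1) * k)) ^ (k - a) ≤ y ^ (k - a) :=
    pow_le_pow_left₀ (by positivity) hyC _
  have h16 : (16 : ℝ) ≤ 4 ^ (k - a) := by
    calc (16 : ℝ) = 4 ^ 2 := by norm_num
      _ ≤ 4 ^ (k - a) := pow_le_pow_right₀ (by norm_num) (by omega)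
  have hCn : (0 : ℝ) ≤ ((2 : ℝ) ^ (k - 1) * k) ^ (k - a) := by positivity
  have hstep4 : 6 * Ac k 1 < Ac a 1 * y ^ (k - a) := by
    have hposM : (0:ℝ) < Ac a 1 * ((2:ℝ) ^ (k - 1) * k) ^ (k - a) := by
      exact mul_pos hA1 (pow_pos hCpos _)
    have H1 := mul_le_mul_of_nonneg_left hpowC hA1.le
    rw [mul_pow] at H1
    have H2 : 0 ≤ Ac a 1 * ((2:ℝ) ^ (k - 1) * k) ^ (k - a) * ((4:ℝ) ^ (k - a) - 16) :=
      mul_nonneg hposM.le (sub_nonneg.mpr h16)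
    linarith [hAr]
  have hG : Ac k 1 / y ^ (k + 1) < Ac a 1 / (6 * y ^ (a + 1)) := by
    rw [div_lt_div_iff₀ (by positivity) (by positivity)]
    have epow : y ^ (k + 1) = y ^ (a + 1) * y ^ (k - a) := by
      rw [← pow_add]
      congr 1
      omega
    rw [epow]
    have h10 := mul_lt_mul_of_pos_right hstep4 (pow_pos hy0 (a + 1))
    linarith
  have hup : Gp k 1 y ≤ Ac k 1 / y ^ (k + 1) := Gp1_upper k y hy0
  -- final assembly
  have hhalf : Ac a 1 / (6 * y ^ (a + 1)) = (Ac a 1 / (3 * y ^ (a + 1))) / 2 := by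
    rw [div_div]
    ring_nf
  have hquarter : Ac a 1 / (4 * u ^ (a + 1)) = (Ac a 1 / (2 * u ^ (a + 1))) / 2 := by
    rw [div_div]
    ring_nf
  linarith

lemma ds_sum : ∀ (q : ℕ) (h : ℕ → ℕ), (∀ i j, i < j → j ≤ q → h j < h i) →
    ds (∑ j ∈ range (q + 1), 2 ^ h j) = q + 1 := by
  intro q
  induction q with
  | zero => intro h _; simpa using ds_pow (h 0)
  | succ q ih =>
    intro h hdec
    rw [Finset.sum_range_succ]
    have hdvd : 2 ^ (h (q + 1) + 1) ∣ ∑ j ∈ range (q + 1), 2 ^ h j := by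
      apply Finset.dvd_sum
      intro j hj
      apply pow_dvd_pow
      have hj' : j < q + 1 := Finset.mem_range.mp hj
      have : h (q + 1) < h j := hdec j (q + 1) hj' (le_refl _)
      omega
    rw [ds_add (h (q + 1) + 1) _ _ hdvd (by
      have : (2:ℕ) ^ h (q + 1) < 2 ^ (h (q + 1) + 1) := by
        apply Nat.pow_lt_pow_right (by norm_num)
        omega
      omega), ds_pow]
    rw [ih h (fun i j hij hjq => hdec i j hij (by omega))]

lemma key : ∀ (q : ℕ) (h : ℕ → ℕ) (k : ℕ) (x : ℝ),
    (∀ i j, i < j → j ≤ q → h j < h i) →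
    ((∑ j ∈ Finset.range (q + 1), 2 ^ h j) < 2 ^ k) →
    (2 ^ (k + 1) * ((k : ℝ) + 1) ≤ x) →
    Gp k 1 (x - 2 ^ k) <
      (-1 : ℝ) ^ q * (∑ ℓ ∈ Finset.range (∑ j ∈ Finset.range (q + 1), 2 ^ h j),
        tmSign ℓ / (x + ℓ)) ∧
    (-1 : ℝ) ^ q * (∑ ℓ ∈ Finset.range (∑ j ∈ Finset.range (q + 1), 2 ^ h j),
        tmSign ℓ / (x + ℓ))
      ≤ Gp (h q) 1 (x + ((∑ j ∈ Finset.range q, 2 ^ h j : ℕ) : ℝ)) := by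
  intro q
  induction q with
  | zero =>
    intro h k x _ hrk hx
    have hsum : ∑ j ∈ Finset.range 1, 2 ^ h j = 2 ^ h 0 := by simp
    rw [hsum] at hrk ⊢
    have hhk : h 0 < k := by
      have := hrk
      exact (Nat.pow_lt_pow_iff_right (by norm_num : 1 < 2)).mp this
    have hGp : (∑ ℓ ∈ Finset.range (2 ^ h 0), tmSign ℓ / (x + ℓ)) = Gp (h 0) 1 x := by
      unfold Gp
      apply Finset.sum_congr rfl
      intro ℓ _
      rw [pow_one, div_eq_mul_inv]
    constructor
    · rw [pow_zero, one_mul, hGp]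
      exact base0 (h 0) k hhk x hx
    · rw [pow_zero, one_mul, hGp]
      simp
  | succ q ih =>
    intro h k x hdec hrk hx
    rw [Finset.sum_range_succ (fun j => 2 ^ h j) (q + 1)] at hrk ⊢
    -- notation
    set m : ℕ := ∑ j ∈ Finset.range (q + 1), 2 ^ h j with hm_def
    have hsum1 : m = (∑ j ∈ Finset.range q, 2 ^ h j) + 2 ^ h q :=
      Finset.sum_range_succ _ _
    have hm_lt : m < 2 ^ k := by
      have h1 : (0:ℕ) < 2 ^ h (q + 1) := Nat.pow_pos (by norm_num)
      omega
    have hq_lt_k : h q < k := by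
      have h1 : 2 ^ h q ≤ m := by
        rw [hm_def]
        exact Finset.single_le_sum (f := fun j => 2 ^ h j) (fun i _ => Nat.zero_le _)
          (Finset.mem_range.mpr (by omega))
      have h2 : (2:ℕ) ^ h q < 2 ^ k := by omega
      exact (Nat.pow_lt_pow_iff_right (by norm_num : 1 < 2)).mp h2
    have hq1_lt_q : h (q + 1) < h q := hdec q (q + 1) (by omega) (le_refl _)
    -- positivity
    have h2k : (0:ℝ) < 2 ^ k := by positivity
    have hx0 : (0:ℝ) < x := by
      have hp : (0:ℝ) < 2 ^ (k + 1) * ((k : ℝ) + 1) := by positivity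
      linarith
    have hy0 : (0:ℝ) < x - 2 ^ k := by
      have e1 : (2:ℝ) ^ (k + 1) = 2 ^ k * 2 := pow_succ 2 k
      have hK0 : (0:ℝ) ≤ (k:ℝ) := Nat.cast_nonneg k
      nlinarith
    -- split the sum
    have hsplit : (∑ ℓ ∈ Finset.range (m + 2 ^ h (q + 1)), tmSign ℓ / (x + ℓ))
        = (∑ ℓ ∈ Finset.range m, tmSign ℓ / (x + ℓ))
          + (-1:ℝ) ^ (q + 1) * Gp (h (q + 1)) 1 (x + (m:ℝ)) := by
      rw [Finset.sum_range_add]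
      congr 1
      have hsm : tmSign m = (-1:ℝ) ^ (q + 1) := by
        rw [tmSign_eq, ds_sum q h (fun i j hij hjq => hdec i j hij (by omega))]
      have hterm : ∀ i ∈ Finset.range (2 ^ h (q + 1)),
          tmSign (m + i) / (x + ((m + i : ℕ) : ℝ))
          = (-1:ℝ) ^ (q + 1) * (tmSign i * (((x + (m:ℝ)) + (i:ℝ)) ^ 1)⁻¹) := by
        intro i hi
        have hi' : i < 2 ^ (h (q + 1) + 1) := by
          have := Finset.mem_range.mp hi
          have h2 : (2:ℕ) ^ h (q + 1) < 2 ^ (h (q + 1) + 1) := by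
            exact Nat.pow_lt_pow_right (by norm_num) (by omega)
          omega
        have hdvd : 2 ^ (h (q + 1) + 1) ∣ m := by
          rw [hm_def]
          apply Finset.dvd_sum
          intro j hj
          apply pow_dvd_pow
          have hj' : j < q + 1 := Finset.mem_range.mp hj
          have := hdec j (q + 1) hj' (le_refl _)
          omega
        have hadd : tmSign (m + i) = tmSign m * tmSign i := by
          rw [tmSign_eq, tmSign_eq, tmSign_eq, ds_add (h (q + 1) + 1) m i hdvd hi', pow_add]
        rw [hadd, hsm, pow_one, div_eq_mul_inv]
        push_cast
        ring_nf
      rw [Finset.sum_congr rfl hterm, ← Finset.mul_sum]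
      rfl
    -- IH for the prefix
    have hih := ih h k x (fun i j hij hjq => hdec i j hij (by omega)) hm_lt hx
    rw [← hm_def] at hih
    obtain ⟨hih1, hih2⟩ := hih
    have hLpos : 0 < (-1:ℝ) ^ q * (∑ ℓ ∈ Finset.range m, tmSign ℓ / (x + ℓ)) := by
      have := Gp_pos k 0 (x - 2 ^ k) hy0
      linarith
    -- the main rearrangement
    have hsign : ((-1:ℝ) ^ (q + 1)) * ((-1:ℝ) ^ (q + 1)) = 1 := by
      rw [← pow_add, show (q + 1) + (q + 1) = 2 * (q + 1) by ring, pow_mul]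
      norm_num
    have hexp : (-1:ℝ) ^ (q + 1) * (∑ ℓ ∈ Finset.range (m + 2 ^ h (q + 1)), tmSign ℓ / (x + ℓ))
        = Gp (h (q + 1)) 1 (x + (m:ℝ))
          - (-1:ℝ) ^ q * (∑ ℓ ∈ Finset.range m, tmSign ℓ / (x + ℓ)) := by
      rw [hsplit, mul_add, ← mul_assoc, hsign, one_mul, pow_succ]
      ring
    set m' : ℕ := ∑ j ∈ Finset.range q, 2 ^ h j with hm'_def
    have ecast : (x + (m':ℝ)) + (2:ℝ) ^ h q = x + (m:ℝ) := by
      rw [hsum1]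
      push_cast
      ring
    have hmle : (m:ℝ) ≤ (2:ℝ) ^ k := by
      have : (m:ℝ) ≤ ((2 ^ k : ℕ) : ℝ) := Nat.cast_le.mpr hm_lt.le
      rwa [Nat.cast_pow, Nat.cast_ofNat] at this
    have hstar := star (h (q + 1)) (h q) k hq1_lt_q hq_lt_k x (x + (m':ℝ)) hx
      (le_add_of_nonneg_right (Nat.cast_nonneg m'))
      (by rw [ecast]; linarith)
    rw [ecast] at hstar
    constructor
    · rw [hexp]
      linarith [hih2]
    · rw [hexp]
      linarith [hLpos]

end Aux

/-- if `r = ∑_{0 ≤ j ≤ q} 2^{h_j}` with `h_0 > ⋯ > h_q ≥ 0`, `r < 2^k`,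
and `x ≥ 2^{k+1}(k+1)`, then
`(-1)^q ∑_{0 ≤ ℓ < r} ε_ℓ/(x+ℓ) > g_k(x - 2^k) > g_k(x) > 0`. -/
theorem stmt_8 (q : ℕ) (h : ℕ → ℕ)
    (hdec : ∀ i j, i < j → j ≤ q → h j < h i)
    (k : ℕ) (hr : (∑ j ∈ Finset.range (q + 1), 2 ^ h j) < 2 ^ k)
    (x : ℝ) (hx : 2 ^ (k + 1) * ((k : ℝ) + 1) ≤ x) :
    (-1 : ℝ) ^ q *
        (∑ ℓ ∈ Finset.range (∑ j ∈ Finset.range (q + 1), 2 ^ h j),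
          tmSign ℓ / (x + ℓ))
      > gFun k (x - 2 ^ k) ∧
    gFun k (x - 2 ^ k) > gFun k x ∧ gFun k x > 0 := by
  have h2k : (0:ℝ) < 2 ^ k := by positivity
  have hx0 : (0:ℝ) < x := by
    have hp : (0:ℝ) < 2 ^ (k + 1) * ((k : ℝ) + 1) := by positivity
    linarith
  have hy0 : (0:ℝ) < x - 2 ^ k := by
    have e1 : (2:ℝ) ^ (k + 1) = 2 ^ k * 2 := pow_succ 2 k
    have hK0 : (0:ℝ) ≤ (k:ℝ) := Nat.cast_nonneg k
    nlinarith
  obtain ⟨h1, h2⟩ := key q h k x hdec hr hx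
  refine ⟨?_, ?_, ?_⟩
  · rw [gFun_eq]
    exact h1
  · rw [gFun_eq, gFun_eq]
    exact Gp_lt k 0 hy0 (by linarith : x - 2 ^ k < x)
  · rw [gFun_eq]
    exact Gp_pos k 0 x hx0
end
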